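/- Let μ_0, μ_1 be Borel probability measures on (0,∞) with ∫ (x + 1/x) dμ_i(x) < ∞ for i = 0,1, satisfying μ_0 ≼_cx μ_1, and set ν_i = Id_†μ_i. Then the sets A := {z ∈ ℝ : U_{ν_0}(z) < U_{ν_1}(z)} and B := {z ∈ ℝ : U_{μ_0}(z) < U_{μ_1}(z)} are both contained in (0,∞), and a subset I ⊆ ℝ is a connected component of A if and only if its image {1/x : x ∈ I} under the map x ↦ 1/x is a connected component of B. -/

import Mathlib

open MeasureTheory Set Filter
open scoped ENNReal NNReal

/-- The reflected measure `Id_† μ`: the pushforward under `x ↦ 1/x` of the measure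
with density `x / m` with respect to `μ`, where `m = ∫ x ∂μ` is the mean of `μ`. -/
noncomputable def reflect (μ : Measure ℝ) : Measure ℝ :=
  Measure.map (fun x => x⁻¹) (μ.withDensity (fun x => ENNReal.ofReal (x / ∫ y, y ∂μ)))

/-- The potential function of a measure `ρ` on `ℝ`: `U_ρ(z) = ∫ |x - z| dρ(x)`. -/
noncomputable def potential (ρ : Measure ℝ) (z : ℝ) : ℝ := ∫ x, |x - z| ∂ρ

/-- Convex order: `η ≼_cx ρ` iff `∫ f dη ≤ ∫ f dρ` (with integrals valued in `[0,∞]`)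
for every convex function `f : ℝ → [0,∞)`. -/
def ConvexOrder (η ρ : Measure ℝ) : Prop :=
  ∀ f : ℝ → ℝ, ConvexOn ℝ Set.univ f → (∀ x, 0 ≤ f x) →
    ∫⁻ x, ENNReal.ofReal (f x) ∂η ≤ ∫⁻ x, ENNReal.ofReal (f x) ∂ρ

/-- `I` is a connected component of `A` (in the subspace sense). -/
def IsConnComp (I A : Set ℝ) : Prop := ∃ x ∈ A, I = connectedComponentIn A x

/-! ### Auxiliary topology lemmas -/

lemma inv_image_inv_image {S : Set ℝ} :
    (fun x : ℝ => x⁻¹) '' ((fun x : ℝ => x⁻¹) '' S) = S := by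
  rw [← Set.image_comp]
  apply Set.image_congr (g := id) (fun x hx => inv_inv x) |>.trans (Set.image_id S)

lemma comp_image {A B : Set ℝ} (hA : A ⊆ Ioi 0) (hB : B ⊆ Ioi 0)
    (hAB : ∀ z, z ∈ A ↔ 0 < z ∧ z⁻¹ ∈ B) (hBA : ∀ z, z ∈ B ↔ 0 < z ∧ z⁻¹ ∈ A)
    {x : ℝ} (hx : x ∈ A) :
    (fun x : ℝ => x⁻¹) '' connectedComponentIn A x = connectedComponentIn B x⁻¹ := by
  have hsub : ∀ {C D : Set ℝ}, C ⊆ Ioi 0 → D ⊆ Ioi 0 →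
      (∀ z, z ∈ C ↔ 0 < z ∧ z⁻¹ ∈ D) → ∀ {y : ℝ}, y ∈ C →
      (fun x : ℝ => x⁻¹) '' connectedComponentIn C y ⊆ connectedComponentIn D y⁻¹ := by
    intro C D hC hD hCD y hy
    have hpre : IsPreconnected ((fun x : ℝ => x⁻¹) '' connectedComponentIn C y) :=
      isPreconnected_connectedComponentIn.image _
        (continuousOn_inv₀.mono (fun t ht => ne_of_gt (hC (connectedComponentIn_subset C y ht))))
    refine hpre.subset_connectedComponentIn ⟨y, mem_connectedComponentIn hy, rfl⟩ ?_
    rintro _ ⟨t, ht, rfl⟩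
    have htC : t ∈ C := connectedComponentIn_subset C y ht
    exact ((hCD t).1 htC).2
  apply Set.Subset.antisymm (hsub hA hB hAB hx)
  have hx' : x⁻¹ ∈ B := ((hAB x).1 hx).2
  have h2 := hsub hB hA hBA hx'
  rw [inv_inv] at h2
  have h3 : (fun x : ℝ => x⁻¹) '' ((fun x : ℝ => x⁻¹) '' connectedComponentIn B x⁻¹)
      ⊆ (fun x : ℝ => x⁻¹) '' connectedComponentIn A x := Set.image_mono h2
  rwa [inv_image_inv_image] at h3

lemma key {A B : Set ℝ} (hA : A ⊆ Ioi 0) (hB : B ⊆ Ioi 0)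
    (hAB : ∀ z, z ∈ A ↔ 0 < z ∧ z⁻¹ ∈ B) (I : Set ℝ) :
    IsConnComp I A ↔ IsConnComp ((fun x => 1 / x) '' I) B := by
  have hBA : ∀ z, z ∈ B ↔ 0 < z ∧ z⁻¹ ∈ A := by
    intro z
    constructor
    · intro hz
      have hz0 : 0 < z := hB hz
      refine ⟨hz0, (hAB _).2 ⟨by positivity, by rwa [inv_inv]⟩⟩
    · rintro ⟨hz0, hz⟩
      have := (hAB _).1 hz
      have h2 := this.2
      rwa [inv_inv] at h2
  have himg : (fun x : ℝ => 1 / x) = (fun x : ℝ => x⁻¹) := by funext x; simp [one_div]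
  rw [himg]
  constructor
  · rintro ⟨x, hx, rfl⟩
    exact ⟨x⁻¹, (hAB x).1 hx |>.2, comp_image hA hB hAB hBA hx⟩
  · rintro ⟨y, hy, hI⟩
    have hIpos : ∀ t ∈ I, (0:ℝ) < t := by
      intro t ht
      have h1 : t⁻¹ ∈ (fun x : ℝ => x⁻¹) '' I := Set.mem_image_of_mem _ ht
      rw [hI] at h1
      have : t⁻¹ ∈ B := connectedComponentIn_subset B y h1
      have := hB this
      simpa using inv_pos.mp this
    have hIeq : I = (fun x : ℝ => x⁻¹) '' connectedComponentIn B y := by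
      rw [← hI, inv_image_inv_image]
    have hy' : y⁻¹ ∈ A := ((hBA y).1 hy).2
    refine ⟨y⁻¹, hy', ?_⟩
    rw [hIeq, comp_image hB hA hBA hAB hy]

/-! ### Auxiliary measure lemmas -/

section onemeasure
variable {μ : Measure ℝ} [IsProbabilityMeasure μ]

omit [IsProbabilityMeasure μ] in
lemma ae_pos (hsupp : μ (Set.Ioi (0:ℝ))ᶜ = 0) : ∀ᵐ x ∂μ, (0:ℝ) < x := by
  rw [ae_iff]
  convert hsupp using 2
  ext x; simp

omit [IsProbabilityMeasure μ] in
lemma int_id (hsupp : μ (Set.Ioi (0:ℝ))ᶜ = 0) (hint : Integrable (fun x => x + x⁻¹) μ) :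
    Integrable (fun x : ℝ => x) μ := by
  refine hint.mono aestronglyMeasurable_id ?_
  filter_upwards [ae_pos hsupp] with x hx
  have : 0 < x⁻¹ := by positivity
  rw [Real.norm_eq_abs, Real.norm_eq_abs, abs_of_pos hx, abs_of_pos (by linarith)]
  linarith

lemma int_abs (hsupp : μ (Set.Ioi (0:ℝ))ᶜ = 0) (hint : Integrable (fun x => x + x⁻¹) μ)
    (z : ℝ) : Integrable (fun x : ℝ => |x - z|) μ := by
  have h1 : Integrable (fun x : ℝ => |x| + |z|) μ := (int_id hsupp hint).abs.add (integrable_const _)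
  refine h1.mono ((continuous_id.sub continuous_const).abs.aestronglyMeasurable) ?_
  filter_upwards with x
  rw [Real.norm_eq_abs, abs_abs, Real.norm_eq_abs]
  calc |x - z| ≤ |x| + |z| := abs_sub x z
  _ ≤ |(|x| + |z|)| := le_abs_self _

lemma mean_pos (hsupp : μ (Set.Ioi (0:ℝ))ᶜ = 0) (hint : Integrable (fun x => x + x⁻¹) μ) :
    0 < ∫ x, x ∂μ := by
  rw [integral_pos_iff_support_of_nonneg_ae]
  · have : μ (Function.support (fun x : ℝ => x)) ≥ μ (Ioi 0) := by
      apply measure_mono; intro x hx; exact ne_of_gt hx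
    have h1 : μ (Ioi (0:ℝ)) = 1 := by
      have := measure_add_measure_compl (μ := μ) (measurableSet_Ioi (a := (0:ℝ)))
      rw [hsupp] at this; simpa using this
    refine lt_of_lt_of_le ?_ this
    rw [h1]; norm_num
  · filter_upwards [ae_pos hsupp] with x hx; exact le_of_lt hx
  · exact int_id hsupp hint

lemma potential_nonpos (hsupp : μ (Set.Ioi (0:ℝ))ᶜ = 0)
    (hint : Integrable (fun x => x + x⁻¹) μ) {z : ℝ} (hz : z ≤ 0) :
    potential μ z = (∫ x, x ∂μ) - z := by
  unfold potential
  rw [show (∫ x, x ∂μ) - z = ∫ x, (x - z) ∂μ by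
    rw [integral_sub (int_id hsupp hint) (integrable_const _)]; simp]
  apply integral_congr_ae
  filter_upwards [ae_pos hsupp] with x hx
  rw [abs_of_pos (by linarith)]

lemma int_max (hsupp : μ (Set.Ioi (0:ℝ))ᶜ = 0) (hint : Integrable (fun x => x + x⁻¹) μ)
    (a b : ℝ) : Integrable (fun x : ℝ => max (a * x + b) 0) μ := by
  have h1 : Integrable (fun x : ℝ => |a| * |x| + |b|) μ :=
    ((int_id hsupp hint).abs.const_mul |a|).add (integrable_const |b|)
  refine h1.mono (((continuous_const.mul continuous_id).add continuous_const).max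
    continuous_const).aestronglyMeasurable ?_
  filter_upwards with x
  rw [Real.norm_eq_abs, Real.norm_eq_abs]
  have h2 : |max (a * x + b) 0| ≤ |a * x + b| := by
    rw [abs_le]; constructor
    · exact le_trans (neg_abs_le _) (by simp [le_max_iff, neg_abs_le])
    · exact max_le (le_abs_self _) (abs_nonneg _)
  calc |max (a * x + b) 0| ≤ |a * x + b| := h2
  _ ≤ |a * x| + |b| := abs_add_le _ _
  _ = |a| * |x| + |b| := by rw [abs_mul]
  _ ≤ |(|a| * |x| + |b|)| := le_abs_self _

lemma tail_tendsto (hsupp : μ (Set.Ioi (0:ℝ))ᶜ = 0)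
    (hint : Integrable (fun x => x + x⁻¹) μ) :
    Tendsto (fun n : ℕ => ∫ x, max (x - n) 0 ∂μ) atTop (nhds 0) := by
  have h := tendsto_integral_of_dominated_convergence (μ := μ)
    (F := fun (n : ℕ) (x : ℝ) => max (x - n) 0) (f := fun _ => 0) (bound := fun x => |x|)
    (fun n => ((continuous_id.sub continuous_const).max continuous_const).aestronglyMeasurable)
    (int_id hsupp hint).abs ?_ ?_
  · simpa using h
  · intro n
    filter_upwards [ae_pos hsupp] with x hx
    rw [Real.norm_eq_abs, abs_of_nonneg (le_max_right _ _), abs_of_pos hx]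
    have : (0:ℝ) ≤ n := Nat.cast_nonneg n
    apply max_le (by linarith) (le_of_lt hx)
  · filter_upwards with x
    apply Tendsto.congr' (f₁ := fun _ => (0:ℝ)) ?_ tendsto_const_nhds
    filter_upwards [eventually_ge_atTop ⌈x⌉₊] with n hn
    have : x ≤ (n:ℝ) := le_trans (Nat.le_ceil x) (by exact_mod_cast hn)
    simp [max_eq_right, sub_nonpos.2 this]

end onemeasure

/-! ### Convexity lemmas -/

lemma convexOn_affine (a b : ℝ) : ConvexOn ℝ Set.univ (fun x : ℝ => a * x + b) := by
  apply ConvexOn.add ?_ (convexOn_const _ convex_univ)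
  exact ⟨convex_univ, by
    intro x _ y _ p q _ _ _; apply le_of_eq; simp [smul_eq_mul]; ring⟩

lemma convexOn_affine_max (a b : ℝ) : ConvexOn ℝ Set.univ (fun x : ℝ => max (a * x + b) 0) :=
  (convexOn_affine a b).sup (convexOn_const _ convex_univ)

lemma convexOn_abs_sub (z : ℝ) : ConvexOn ℝ Set.univ (fun x : ℝ => |x - z|) := by
  have h := ((convexOn_affine 1 (-z)).sup (convexOn_affine (-1) z))
  convert h using 2 with x
  case e'_8 => rfl
  case e'_10 => rfl
  rw [abs_sub_comm]
  show |z - x| = max (1 * x + -z) (-1 * x + z)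
  rw [abs_sub_comm, abs_eq_max_neg]
  congr 1 <;> ring

/-! ### Convex order consequences -/

section two
variable {μ₀ μ₁ : Measure ℝ} [IsProbabilityMeasure μ₀] [IsProbabilityMeasure μ₁]

omit [IsProbabilityMeasure μ₀] [IsProbabilityMeasure μ₁] in
lemma cx_integral_le (hcx : ConvexOrder μ₀ μ₁) {f : ℝ → ℝ}
    (hconv : ConvexOn ℝ Set.univ f) (hnn : ∀ x, 0 ≤ f x)
    (h0 : Integrable f μ₀) (h1 : Integrable f μ₁) :
    ∫ x, f x ∂μ₀ ≤ ∫ x, f x ∂μ₁ := by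
  have h := hcx f hconv hnn
  rw [← ofReal_integral_eq_lintegral_ofReal h0 (Eventually.of_forall hnn),
    ← ofReal_integral_eq_lintegral_ofReal h1 (Eventually.of_forall hnn)] at h
  exact (ENNReal.ofReal_le_ofReal_iff (integral_nonneg hnn)).1 h

lemma pot_le (hsupp₀ : μ₀ (Set.Ioi (0:ℝ))ᶜ = 0) (hsupp₁ : μ₁ (Set.Ioi (0:ℝ))ᶜ = 0)
    (hint₀ : Integrable (fun x => x + x⁻¹) μ₀) (hint₁ : Integrable (fun x => x + x⁻¹) μ₁)
    (hcx : ConvexOrder μ₀ μ₁) (z : ℝ) : potential μ₀ z ≤ potential μ₁ z :=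
  cx_integral_le hcx (convexOn_abs_sub z) (fun _ => abs_nonneg _)
    (int_abs hsupp₀ hint₀ z) (int_abs hsupp₁ hint₁ z)

lemma means_eq (hsupp₀ : μ₀ (Set.Ioi (0:ℝ))ᶜ = 0) (hsupp₁ : μ₁ (Set.Ioi (0:ℝ))ᶜ = 0)
    (hint₀ : Integrable (fun x => x + x⁻¹) μ₀) (hint₁ : Integrable (fun x => x + x⁻¹) μ₁)
    (hcx : ConvexOrder μ₀ μ₁) : ∫ x, x ∂μ₀ = ∫ x, x ∂μ₁ := by
  set m₀ := ∫ x, x ∂μ₀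
  set m₁ := ∫ x, x ∂μ₁
  have hle : m₀ ≤ m₁ := by
    have h := pot_le hsupp₀ hsupp₁ hint₀ hint₁ hcx (-1)
    rw [potential_nonpos hsupp₀ hint₀ (by norm_num),
      potential_nonpos hsupp₁ hint₁ (by norm_num)] at h
    linarith
  refine le_antisymm hle ?_
  have key : ∀ n : ℕ, m₁ ≤ m₀ + ∫ x, max (x - n) 0 ∂μ₁ := by
    intro n
    have hc := cx_integral_le hcx (f := fun x => max ((-1) * x + n) 0)
      (convexOn_affine_max (-1) n) (fun x => le_max_right _ _)
      (int_max hsupp₀ hint₀ (-1) n) (int_max hsupp₁ hint₁ (-1) n)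
    have hid : ∀ (ν : Measure ℝ) (hs : ν (Set.Ioi (0:ℝ))ᶜ = 0)
        (hi : Integrable (fun x => x + x⁻¹) ν) (_ : IsProbabilityMeasure ν),
        ∫ x, max ((-1) * x + n) 0 ∂ν = n - (∫ x, x ∂ν) + ∫ x, max (x - n) 0 ∂ν := by
      intro ν hs hi hp
      haveI := hp
      have heq : ∀ x : ℝ, max ((-1) * x + n) 0 = (n - x) + max (x - n) 0 := by
        intro x
        rcases le_total x n with h | h
        · rw [max_eq_left (by linarith), max_eq_right (by linarith)]; ring
        · rw [max_eq_right (by linarith), max_eq_left (by linarith)]; ring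
      rw [show (fun x : ℝ => max ((-1) * x + n) 0)
        = fun x : ℝ => ((n:ℝ) - x) + max (x - (n:ℝ)) 0 from funext heq]
      have hf : Integrable (fun x : ℝ => (n:ℝ) - x) ν := (integrable_const _).sub (int_id hs hi)
      have hg : Integrable (fun x : ℝ => max (x - (n:ℝ)) 0) ν := by
        have := int_max hs hi 1 (-(n:ℝ))
        simpa [one_mul, sub_eq_add_neg] using this
      rw [integral_add hf hg, integral_sub (integrable_const _) (int_id hs hi)]
      simp
    rw [hid μ₀ hsupp₀ hint₀ inferInstance, hid μ₁ hsupp₁ hint₁ inferInstance] at hc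
    have hnn : 0 ≤ ∫ x, max (x - (n:ℝ)) 0 ∂μ₀ := integral_nonneg (fun x => le_max_right _ _)
    linarith
  have hlim : Tendsto (fun n : ℕ => m₀ + ∫ x, max (x - n) 0 ∂μ₁) atTop (nhds (m₀ + 0)) :=
    tendsto_const_nhds.add (tail_tendsto hsupp₁ hint₁)
  have := ge_of_tendsto' hlim key
  linarith

end two

/-! ### Potentials of the reflected measure -/

lemma reflect_potential (μ : Measure ℝ) (z : ℝ) :
    potential (reflect μ) z = ∫ x, (Real.toNNReal (x / ∫ y, y ∂μ) : ℝ) * |x⁻¹ - z| ∂μ := by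
  set m := ∫ y, y ∂μ
  unfold potential reflect
  rw [integral_map (φ := fun x : ℝ => x⁻¹) (f := fun x : ℝ => |x - z|) (by fun_prop)
    ((continuous_id.sub continuous_const).abs).aestronglyMeasurable]
  rw [show (fun x : ℝ => ENNReal.ofReal (x / m))
    = fun x : ℝ => ((Real.toNNReal (x / m) : ℝ≥0) : ℝ≥0∞) from rfl]
  rw [integral_withDensity_eq_integral_smul (by fun_prop) (fun x : ℝ => |x⁻¹ - z|)]
  apply integral_congr_ae
  filter_upwards with x
  rw [NNReal.smul_def, smul_eq_mul]

section refl
variable {μ : Measure ℝ} [IsProbabilityMeasure μ]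

omit [IsProbabilityMeasure μ] in
lemma reflect_pot_nonpos (hae : ∀ᵐ x ∂μ, (0:ℝ) < x) (hm : 0 < ∫ y, y ∂μ)
    (hid : Integrable (fun x : ℝ => x) μ) [IsProbabilityMeasure μ] {z : ℝ} (hz : z ≤ 0) :
    potential (reflect μ) z = (∫ y, y ∂μ)⁻¹ - z := by
  rw [reflect_potential]
  set m := ∫ y, y ∂μ with hmdef
  have heq : ∀ᵐ x ∂μ, (Real.toNNReal (x / m) : ℝ) * |x⁻¹ - z| = m⁻¹ - (z / m) * x := by
    filter_upwards [hae] with x hx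
    rw [Real.coe_toNNReal _ (div_nonneg hx.le hm.le)]
    have hxinv : (0:ℝ) < x⁻¹ := by positivity
    rw [abs_of_pos (by linarith)]
    field_simp
  rw [integral_congr_ae heq, integral_sub (integrable_const _) (hid.const_mul _),
    integral_const_mul, integral_const]
  simp only [measure_univ, probReal_univ, ENNReal.toReal_one, smul_eq_mul, one_mul]
  rw [div_mul_cancel₀ _ (ne_of_gt hm)]

omit [IsProbabilityMeasure μ] in
lemma reflect_pot_pos (hae : ∀ᵐ x ∂μ, (0:ℝ) < x) (hm : 0 < ∫ y, y ∂μ)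
    {z : ℝ} (hz : 0 < z) :
    potential (reflect μ) z = (z / (∫ y, y ∂μ)) * potential μ z⁻¹ := by
  rw [reflect_potential]
  set m := ∫ y, y ∂μ with hmdef
  have heq : ∀ᵐ x ∂μ, (Real.toNNReal (x / m) : ℝ) * |x⁻¹ - z| = (z / m) * |x - z⁻¹| := by
    filter_upwards [hae] with x hx
    rw [Real.coe_toNNReal _ (div_nonneg hx.le hm.le)]
    have h1 : x * (x⁻¹ - z) = -(z * (x - z⁻¹)) := by
      field_simp
      ring
    calc (x / m) * |x⁻¹ - z| = |x * (x⁻¹ - z)| / m := by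
          rw [abs_mul, abs_of_pos hx]; ring
    _ = |z * (x - z⁻¹)| / m := by rw [h1, abs_neg]
    _ = (z / m) * |x - z⁻¹| := by rw [abs_mul, abs_of_pos hz]; ring
  rw [integral_congr_ae heq, integral_const_mul]
  rfl

end refl

/-- For Borel probability measures `μ₀, μ₁` on `(0,∞)` with `∫ (x + 1/x) dμᵢ < ∞` and
`μ₀ ≼_cx μ₁`, setting `νᵢ = Id_† μᵢ`, the sets `A = {U_{ν₀} < U_{ν₁}}` and
`B = {U_{μ₀} < U_{μ₁}}` are contained in `(0,∞)`, and `I` is a connected component of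
`A` iff `{1/x : x ∈ I}` is a connected component of `B`. -/
theorem stmt5 (μ₀ μ₁ : Measure ℝ) [IsProbabilityMeasure μ₀] [IsProbabilityMeasure μ₁]
    (hsupp₀ : μ₀ (Set.Ioi (0:ℝ))ᶜ = 0) (hsupp₁ : μ₁ (Set.Ioi (0:ℝ))ᶜ = 0)
    (hint₀ : Integrable (fun x => x + x⁻¹) μ₀)
    (hint₁ : Integrable (fun x => x + x⁻¹) μ₁)
    (hcx : ConvexOrder μ₀ μ₁) :
    {z : ℝ | potential (reflect μ₀) z < potential (reflect μ₁) z} ⊆ Set.Ioi (0:ℝ) ∧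
    {z : ℝ | potential μ₀ z < potential μ₁ z} ⊆ Set.Ioi (0:ℝ) ∧
    (∀ I : Set ℝ,
      IsConnComp I {z : ℝ | potential (reflect μ₀) z < potential (reflect μ₁) z}
        ↔ IsConnComp ((fun x => 1 / x) '' I)
            {z : ℝ | potential μ₀ z < potential μ₁ z}) := by
  have hae₀ := ae_pos hsupp₀
  have hae₁ := ae_pos hsupp₁
  have hm₀ := mean_pos hsupp₀ hint₀
  have hm₁ := mean_pos hsupp₁ hint₁
  have hmeq := means_eq hsupp₀ hsupp₁ hint₀ hint₁ hcx
  set A := {z : ℝ | potential (reflect μ₀) z < potential (reflect μ₁) z} with hAdef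
  set B := {z : ℝ | potential μ₀ z < potential μ₁ z} with hBdef
  have hB : B ⊆ Ioi 0 := by
    intro z hz
    by_contra h
    have hz0 : z ≤ 0 := by simpa using h
    have hlt : potential μ₀ z < potential μ₁ z := hz
    rw [potential_nonpos hsupp₀ hint₀ hz0, potential_nonpos hsupp₁ hint₁ hz0, hmeq] at hlt
    exact lt_irrefl _ hlt
  have hA : A ⊆ Ioi 0 := by
    intro z hz
    by_contra h
    have hz0 : z ≤ 0 := by simpa using h
    have hlt : potential (reflect μ₀) z < potential (reflect μ₁) z := hz
    rw [reflect_pot_nonpos hae₀ hm₀ (int_id hsupp₀ hint₀) hz0,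
      reflect_pot_nonpos hae₁ hm₁ (int_id hsupp₁ hint₁) hz0, hmeq] at hlt
    exact lt_irrefl _ hlt
  have hAB : ∀ z, z ∈ A ↔ 0 < z ∧ z⁻¹ ∈ B := by
    intro z
    constructor
    · intro hz
      have hz0 : 0 < z := hA hz
      refine ⟨hz0, ?_⟩
      have hlt : potential (reflect μ₀) z < potential (reflect μ₁) z := hz
      rw [reflect_pot_pos hae₀ hm₀ hz0, reflect_pot_pos hae₁ hm₁ hz0, ← hmeq] at hlt
      have hpos : 0 < z / (∫ y, y ∂μ₀) := by positivity
      exact (mul_lt_mul_iff_right₀ hpos).1 hlt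
    · rintro ⟨hz0, hzB⟩
      have hlt : potential μ₀ z⁻¹ < potential μ₁ z⁻¹ := hzB
      show potential (reflect μ₀) z < potential (reflect μ₁) z
      rw [reflect_pot_pos hae₀ hm₀ hz0, reflect_pot_pos hae₁ hm₁ hz0, ← hmeq]
      have hpos : 0 < z / (∫ y, y ∂μ₀) := by positivity
      exact (mul_lt_mul_iff_right₀ hpos).2 hlt
  exact ⟨hA, hB, key hA hB hAB⟩
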